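/- Let q ≥ 2, n ≥ 2, and 1 ≤ r ≤ q. Then for all Banach spaces E₁,…,Eₙ, every bounded n-linear form T : E₁×⋯×Eₙ → 𝕂 is multiple (q;1,…,1,r)-summing, i.e. (∑_{j₁,…,jₙ}|T(x_{j₁}^{(1)},…,x_{jₙ}^{(n)})|^q)^{1/q} ≤ C‖T‖ (∏_{i=1}^{n−1}‖(x_j^{(i)})‖_{w,1}) ‖(x_j^{(n)})‖_{w,r}. -/

import Mathlib

open scoped BigOperators

/-- The weak `ℓ_p` norm of a finite family in a normed space. -/
noncomputable def weakNorm (𝕜 : Type*) [RCLike 𝕜] {E : Type*} [NormedAddCommGroup E]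
    [NormedSpace 𝕜 E] (p : ℝ) {m : ℕ} (x : Fin m → E) : ℝ :=
  sSup {s | ∃ φ : E →L[𝕜] 𝕜, ‖φ‖ ≤ 1 ∧ s = (∑ j, ‖φ (x j)‖ ^ p) ^ p⁻¹}

open Finset

section Helpers

variable {𝕜 : Type*} [RCLike 𝕜]

/-- Signs as scalars. -/
noncomputable def msSg (𝕜 : Type*) [RCLike 𝕜] (b : Bool) : 𝕜 := if b then 1 else -1

lemma msSg_norm (b : Bool) : ‖msSg 𝕜 b‖ = 1 := by cases b <;> simp [msSg]

lemma ms_rpow_two (t : ℝ) : t ^ (2:ℝ) = t * t := by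
  rw [show (2:ℝ) = ((2:ℕ):ℝ) by norm_num, Real.rpow_natCast, pow_two]

lemma ms_orth {m : ℕ} (c : Fin m → 𝕜) :
    ∑ ε : Fin m → Bool, ‖∑ j, msSg 𝕜 (ε j) * c j‖ ^ (2:ℝ) = 2 ^ m * ∑ j, ‖c j‖ ^ (2:ℝ) := by
  induction m with
  | zero =>
    simp [ms_rpow_two]
  | succ m ih =>
    have key : ∀ (a R : 𝕜), ∑ b : Bool, ‖msSg 𝕜 b * a + R‖ ^ (2:ℝ)
        = 2 * (‖a‖ ^ (2:ℝ) + ‖R‖ ^ (2:ℝ)) := by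
      intro a R
      simp only [ms_rpow_two]
      have hpar := parallelogram_law_with_norm 𝕜 a R
      have h1 : msSg 𝕜 false * a + R = -(a - R) := by simp [msSg]; ring
      have h2 : msSg 𝕜 true * a + R = a + R := by simp [msSg]
      rw [Fintype.sum_bool, h1, h2, norm_neg]
      linarith
    have hsum : ∑ ε : Fin (m+1) → Bool, ‖∑ j, msSg 𝕜 (ε j) * c j‖ ^ (2:ℝ)
        = ∑ p : Bool × (Fin m → Bool),
            ‖∑ j, msSg 𝕜 ((Fin.consEquiv (fun _ => Bool)) p j) * c j‖ ^ (2:ℝ) :=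
      (Fintype.sum_equiv (Fin.consEquiv fun _ => Bool) _ _ (fun p => rfl)).symm
    rw [hsum, Fintype.sum_prod_type]
    have hinner : ∀ (b : Bool) (ε : Fin m → Bool),
        ∑ j, msSg 𝕜 ((Fin.consEquiv (fun _ => Bool)) (b, ε) j) * c j
          = msSg 𝕜 b * c 0 + ∑ j : Fin m, msSg 𝕜 (ε j) * c j.succ := by
      intro b ε
      rw [Fin.sum_univ_succ]
      simp [Fin.consEquiv]
    simp_rw [hinner]
    rw [Finset.sum_comm]
    have hk : ∀ ε : Fin m → Bool,
        ∑ b : Bool, ‖msSg 𝕜 b * c 0 + ∑ j : Fin m, msSg 𝕜 (ε j) * c j.succ‖ ^ (2:ℝ)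
        = 2 * (‖c 0‖ ^ (2:ℝ) + ‖∑ j : Fin m, msSg 𝕜 (ε j) * c j.succ‖ ^ (2:ℝ)) :=
      fun ε => key (c 0) _
    simp_rw [hk]
    have hcard : (Finset.univ : Finset (Fin m → Bool)).card = 2 ^ m := by
      simp [Fintype.card_fun]
    have ihs := ih (fun j => c j.succ)
    rw [Fin.sum_univ_succ (f := fun j => ‖c j‖ ^ (2:ℝ))]
    simp_rw [mul_add]
    rw [Finset.sum_add_distrib, Finset.sum_const, ← Finset.mul_sum, ihs, hcard]
    push_cast
    ring

lemma ms_sum_rpow_le {ι : Type*} (s : Finset ι) (a : ι → ℝ) (ha : ∀ i ∈ s, 0 ≤ a i)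
    {p : ℝ} (hp : 1 ≤ p) : ∑ i ∈ s, a i ^ p ≤ (∑ i ∈ s, a i) ^ p := by
  have hS : 0 ≤ ∑ i ∈ s, a i := Finset.sum_nonneg ha
  have hp0 : (1:ℝ) + (p - 1) ≠ 0 := by intro h; nlinarith [h, hp]
  calc ∑ i ∈ s, a i ^ p = ∑ i ∈ s, a i ^ (1 + (p-1) : ℝ) := by norm_num
    _ = ∑ i ∈ s, a i ^ (1:ℝ) * a i ^ (p-1) := by
        refine Finset.sum_congr rfl fun i hi => ?_
        exact Real.rpow_add' (ha i hi) hp0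
    _ ≤ ∑ i ∈ s, a i * (∑ i ∈ s, a i) ^ (p-1) := by
        refine Finset.sum_le_sum fun i hi => ?_
        rw [Real.rpow_one]
        exact mul_le_mul_of_nonneg_left
          (Real.rpow_le_rpow (ha i hi) (Finset.single_le_sum ha hi) (by linarith)) (ha i hi)
    _ = (∑ i ∈ s, a i) ^ (1:ℝ) * (∑ i ∈ s, a i) ^ (p-1) := by
        rw [← Finset.sum_mul, Real.rpow_one]
    _ = (∑ i ∈ s, a i) ^ p := by rw [← Real.rpow_add' hS hp0]; norm_num

lemma ms_Lp_mono {ι : Type*} [Fintype ι] (a : ι → ℝ) (ha : ∀ i, 0 ≤ a i)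
    {p q : ℝ} (hp : 1 ≤ p) (hpq : p ≤ q) :
    (∑ i, a i ^ q) ^ q⁻¹ ≤ (∑ i, a i ^ p) ^ p⁻¹ := by
  set S := (∑ i, a i ^ p) ^ p⁻¹ with hSdef
  have hp0 : p ≠ 0 := by intro h; rw [h] at hp; linarith
  have hq1 : (1:ℝ) ≤ q := le_trans hp hpq
  have hq0 : q ≠ 0 := by intro h; rw [h] at hq1; linarith
  have hsum : 0 ≤ ∑ i, a i ^ p := Finset.sum_nonneg fun i _ => Real.rpow_nonneg (ha i) p
  have hS0 : 0 ≤ S := Real.rpow_nonneg hsum _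
  have hSp : S ^ p = ∑ i, a i ^ p := Real.rpow_inv_rpow hsum hp0
  have hpe0 : (p:ℝ) + (q - p) ≠ 0 := by intro h; nlinarith [h, hp, hpq]
  have hai : ∀ i, a i ≤ S := by
    intro i
    have h1 : a i ^ p ≤ S ^ p := by
      rw [hSp]
      exact Finset.single_le_sum (f := fun i => a i ^ p)
        (fun i _ => Real.rpow_nonneg (ha i) p) (Finset.mem_univ i)
    exact (Real.rpow_le_rpow_iff (ha i) hS0 (by linarith)).mp h1
  have hkey : ∑ i, a i ^ q ≤ S ^ q := by
    calc ∑ i, a i ^ q = ∑ i, a i ^ p * a i ^ (q - p) := by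
          refine Finset.sum_congr rfl fun i _ => ?_
          rw [← Real.rpow_add' (ha i) hpe0]
          norm_num
      _ ≤ ∑ i, a i ^ p * S ^ (q - p) := by
          refine Finset.sum_le_sum fun i _ => ?_
          exact mul_le_mul_of_nonneg_left
            (Real.rpow_le_rpow (ha i) (hai i) (by linarith)) (Real.rpow_nonneg (ha i) p)
      _ = S ^ p * S ^ (q - p) := by rw [← Finset.sum_mul, hSp]
      _ = S ^ q := by rw [← Real.rpow_add' hS0 hpe0]; norm_num
  have h2 := Real.rpow_le_rpow (Finset.sum_nonneg fun i _ => Real.rpow_nonneg (ha i) q)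
    hkey (by positivity : (0:ℝ) ≤ q⁻¹)
  rwa [Real.rpow_rpow_inv hS0 hq0] at h2

lemma ms_mean_rpow {ι : Type*} [Fintype ι] [Nonempty ι] (z : ι → ℝ) (hz : ∀ i, 0 ≤ z i)
    {p : ℝ} (hp : 1 ≤ p) :
    ((Fintype.card ι : ℝ)⁻¹ * ∑ i, z i) ^ p ≤ (Fintype.card ι : ℝ)⁻¹ * ∑ i, z i ^ p := by
  have hcard : (0:ℝ) < (Fintype.card ι : ℝ) := by exact_mod_cast Fintype.card_pos
  have h := Real.rpow_arith_mean_le_arith_mean_rpow Finset.univ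
    (fun _ => (Fintype.card ι : ℝ)⁻¹) z (fun _ _ => by positivity)
    (by rw [Finset.sum_const, nsmul_eq_mul, Finset.card_univ]; field_simp) (fun i _ => hz i) hp
  simpa [← Finset.mul_sum] using h

lemma ms_avg {m : ℕ} (d : Fin m → 𝕜) {q : ℝ} (hq : 2 ≤ q) :
    ∑ j₀, ‖d j₀‖ ^ q ≤ ((2:ℝ) ^ m)⁻¹ * ∑ ε : Fin m → Bool, ‖∑ j₀, msSg 𝕜 (ε j₀) * d j₀‖ ^ q := by
  have hq2 : (1:ℝ) ≤ q / 2 := by linarith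
  have e2 : ∀ t : ℝ, 0 ≤ t → (t ^ (2:ℝ)) ^ (q/2) = t ^ q := fun t ht => by
    rw [← Real.rpow_mul ht]; congr 1; ring
  have hN0 : (0:ℝ) < (2:ℝ) ^ m := by positivity
  have hcard : (Fintype.card (Fin m → Bool) : ℝ) = (2:ℝ) ^ m := by
    rw [Fintype.card_fun]
    push_cast
    norm_num
  have h1 : ∑ j₀, ‖d j₀‖ ^ q ≤ (∑ j₀, ‖d j₀‖ ^ (2:ℝ)) ^ (q/2) := by
    calc ∑ j₀, ‖d j₀‖ ^ q = ∑ j₀, (‖d j₀‖ ^ (2:ℝ)) ^ (q/2) :=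
          Finset.sum_congr rfl fun j₀ _ => (e2 _ (norm_nonneg _)).symm
      _ ≤ (∑ j₀, ‖d j₀‖ ^ (2:ℝ)) ^ (q/2) :=
          ms_sum_rpow_le _ _ (fun j₀ _ => Real.rpow_nonneg (norm_nonneg _) _) hq2
  have horth := ms_orth (𝕜 := 𝕜) d
  have hmean := ms_mean_rpow (ι := Fin m → Bool)
    (fun ε => ‖∑ j₀, msSg 𝕜 (ε j₀) * d j₀‖ ^ (2:ℝ))
    (fun ε => Real.rpow_nonneg (norm_nonneg _) _) hq2
  rw [hcard, horth, inv_mul_cancel_left₀ hN0.ne'] at hmean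
  refine le_trans h1 (le_trans hmean ?_)
  refine mul_le_mul_of_nonneg_left ?_ (by positivity)
  exact Finset.sum_le_sum fun ε _ => le_of_eq (e2 _ (norm_nonneg _))

variable {E : Type*} [NormedAddCommGroup E] [NormedSpace 𝕜 E]

lemma weakNorm_bddAbove (p : ℝ) (hp : 0 ≤ p) {m : ℕ} (x : Fin m → E) :
    BddAbove {s | ∃ φ : E →L[𝕜] 𝕜, ‖φ‖ ≤ 1 ∧ s = (∑ j, ‖φ (x j)‖ ^ p) ^ p⁻¹} := by
  refine ⟨(∑ j, ‖x j‖ ^ p) ^ p⁻¹, ?_⟩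
  rintro s ⟨φ, hφ, rfl⟩
  refine Real.rpow_le_rpow (Finset.sum_nonneg fun j _ => Real.rpow_nonneg (norm_nonneg _) p)
    (Finset.sum_le_sum fun j _ => Real.rpow_le_rpow (norm_nonneg _) ?_ hp)
    (by positivity)
  calc ‖φ (x j)‖ ≤ ‖φ‖ * ‖x j‖ := φ.le_opNorm (x j)
    _ ≤ 1 * ‖x j‖ := mul_le_mul_of_nonneg_right hφ (norm_nonneg _)
    _ = ‖x j‖ := one_mul _

lemma weakNorm_mem_nonneg {p : ℝ} (hp : 0 < p) {m : ℕ} (x : Fin m → E) :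
    (0 : ℝ) ∈ {s | ∃ φ : E →L[𝕜] 𝕜, ‖φ‖ ≤ 1 ∧ s = (∑ j, ‖φ (x j)‖ ^ p) ^ p⁻¹} := by
  refine ⟨0, by simp, ?_⟩
  simp [Real.zero_rpow hp.ne', Real.zero_rpow (inv_ne_zero hp.ne')]

lemma weakNorm_nonneg {p : ℝ} (hp : 0 < p) {m : ℕ} (x : Fin m → E) :
    0 ≤ weakNorm 𝕜 p x :=
  le_csSup (weakNorm_bddAbove p hp.le x) (weakNorm_mem_nonneg hp x)

lemma le_weakNorm {p : ℝ} (hp : 0 < p) {m : ℕ} (x : Fin m → E)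
    (φ : E →L[𝕜] 𝕜) (hφ : ‖φ‖ ≤ 1) :
    (∑ j, ‖φ (x j)‖ ^ p) ^ p⁻¹ ≤ weakNorm 𝕜 p x :=
  le_csSup (weakNorm_bddAbove p hp.le x) ⟨φ, hφ, rfl⟩

lemma sum_rpow_le_weakNorm_rpow {p : ℝ} (hp : 0 < p) {m : ℕ} (x : Fin m → E)
    (φ : E →L[𝕜] 𝕜) (hφ : ‖φ‖ ≤ 1) :
    ∑ j, ‖φ (x j)‖ ^ p ≤ (weakNorm 𝕜 p x) ^ p := by
  have hsum : 0 ≤ ∑ j, ‖φ (x j)‖ ^ p :=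
    Finset.sum_nonneg fun j _ => Real.rpow_nonneg (norm_nonneg _) p
  have h := Real.rpow_le_rpow (Real.rpow_nonneg hsum _) (le_weakNorm hp x φ hφ) hp.le
  rwa [Real.rpow_inv_rpow hsum hp.ne'] at h

lemma weakNorm_anti {p q : ℝ} (hp : 1 ≤ p) (hpq : p ≤ q) {m : ℕ} (x : Fin m → E) :
    weakNorm 𝕜 q x ≤ weakNorm 𝕜 p x := by
  have hq1 : (1:ℝ) ≤ q := le_trans hp hpq
  refine csSup_le ⟨_, weakNorm_mem_nonneg (by linarith : (0:ℝ) < q) x⟩ ?_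
  rintro s ⟨φ, hφ, rfl⟩
  calc (∑ j, ‖φ (x j)‖ ^ q) ^ q⁻¹ ≤ (∑ j, ‖φ (x j)‖ ^ p) ^ p⁻¹ :=
        ms_Lp_mono _ (fun j => norm_nonneg _) hp hpq
    _ ≤ weakNorm 𝕜 p x := le_weakNorm (by linarith) x φ hφ

lemma clm_sum_rpow_le {q : ℝ} (hq1 : 1 ≤ q) {m : ℕ} (x : Fin m → E) (φ : E →L[𝕜] 𝕜) :
    ∑ j, ‖φ (x j)‖ ^ q ≤ (‖φ‖ * weakNorm 𝕜 q x) ^ q := by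
  have hq0 : (0:ℝ) < q := by linarith
  rcases eq_or_ne φ 0 with h | h
  · subst h
    simp [Real.zero_rpow hq0.ne']
  · have hφ : 0 < ‖φ‖ := norm_pos_iff.mpr h
    set ψ : E →L[𝕜] 𝕜 := ((‖φ‖⁻¹ : ℝ) : 𝕜) • φ with hψ
    have hnc : ‖((‖φ‖⁻¹ : ℝ) : 𝕜)‖ = ‖φ‖⁻¹ := by
      rw [RCLike.norm_ofReal, abs_of_nonneg (by positivity)]
    have hψn : ‖ψ‖ ≤ 1 := by
      rw [hψ]
      refine le_trans (ContinuousLinearMap.opNorm_smul_le _ _) ?_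
      rw [hnc, inv_mul_cancel₀ hφ.ne']
    have h1 : ∀ j, ‖φ (x j)‖ = ‖φ‖ * ‖ψ (x j)‖ := by
      intro j
      rw [hψ]
      simp only [ContinuousLinearMap.coe_smul', Pi.smul_apply, norm_smul, hnc]
      field_simp
    calc ∑ j, ‖φ (x j)‖ ^ q = ∑ j, ‖φ‖ ^ q * ‖ψ (x j)‖ ^ q := by
          refine Finset.sum_congr rfl fun j _ => ?_
          rw [h1 j, Real.mul_rpow hφ.le (norm_nonneg _)]
      _ = ‖φ‖ ^ q * ∑ j, ‖ψ (x j)‖ ^ q := by rw [← Finset.mul_sum]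
      _ ≤ ‖φ‖ ^ q * (weakNorm 𝕜 q x) ^ q :=
          mul_le_mul_of_nonneg_left (sum_rpow_le_weakNorm_rpow hq0 x ψ hψn)
            (Real.rpow_nonneg hφ.le q)
      _ = (‖φ‖ * weakNorm 𝕜 q x) ^ q :=
          (Real.mul_rpow hφ.le (weakNorm_nonneg hq0 x)).symm

lemma norm_sum_smul_le_weakNorm {m : ℕ} (c : Fin m → 𝕜) (hc : ∀ j, ‖c j‖ ≤ 1)
    (x : Fin m → E) : ‖∑ j, c j • x j‖ ≤ weakNorm 𝕜 1 x := by
  obtain ⟨g, hg1, hgz⟩ := exists_dual_vector'' 𝕜 (∑ j, c j • x j)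
  calc ‖∑ j, c j • x j‖ = ‖g (∑ j, c j • x j)‖ := by
        rw [hgz, RCLike.norm_ofReal, abs_of_nonneg (norm_nonneg _)]
    _ = ‖∑ j, c j • g (x j)‖ := by rw [map_sum]; simp_rw [map_smul]
    _ ≤ ∑ j, ‖c j • g (x j)‖ := norm_sum_le _ _
    _ ≤ ∑ j, ‖g (x j)‖ := by
        refine Finset.sum_le_sum fun j _ => ?_
        rw [norm_smul]
        exact mul_le_of_le_one_left (norm_nonneg _) (hc j)
    _ = (∑ j, ‖g (x j)‖ ^ (1:ℝ)) ^ (1:ℝ)⁻¹ := by simp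
    _ ≤ weakNorm 𝕜 1 x := le_weakNorm one_pos x g hg1

end Helpers

section Main

universe u v

variable {𝕜 : Type u} [RCLike 𝕜]

theorem ms_aux (q r : ℝ) (hq : 2 ≤ q) (hr : 1 ≤ r) (hrq : r ≤ q) (k : ℕ) :
    ∀ (E : Fin (k + 1) → Type v) [∀ i, NormedAddCommGroup (E i)] [∀ i, NormedSpace 𝕜 (E i)]
      (T : ContinuousMultilinearMap 𝕜 E 𝕜) (m : ℕ) (x : ∀ i, Fin m → E i),
      ∑ j : Fin (k + 1) → Fin m, ‖T (fun i => x i (j i))‖ ^ q ≤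
        (‖T‖ * ∏ i, weakNorm 𝕜 (if i = Fin.last k then r else 1) (x i)) ^ q := by
  have hq1 : (1:ℝ) ≤ q := by linarith
  have hq0 : (0:ℝ) < q := by linarith
  have hr0 : (0:ℝ) < r := by linarith
  induction k with
  | zero =>
    intro E _ _ T m x
    -- the linear case
    let φL : E 0 →ₗ[𝕜] 𝕜 :=
      { toFun := fun v => T (Fin.cons v fun i => i.elim0)
        map_add' := fun a b => T.toMultilinearMap.cons_add _ a b
        map_smul' := fun c a => T.toMultilinearMap.cons_smul _ c a }
    have hφbound : ∀ v : E 0, ‖φL v‖ ≤ ‖T‖ * ‖v‖ := by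
      intro v
      calc ‖T (Fin.cons v fun i => i.elim0)‖
          ≤ ‖T‖ * ∏ i, ‖(Fin.cons v fun i => i.elim0 : ∀ i : Fin 1, E i) i‖ := T.le_opNorm _
        _ = ‖T‖ * ‖v‖ := by rw [Fin.prod_univ_one]; rfl
    let φ : E 0 →L[𝕜] 𝕜 := φL.mkContinuous ‖T‖ hφbound
    have hφn : ‖φ‖ ≤ ‖T‖ := φL.mkContinuous_norm_le (norm_nonneg T) hφbound
    have htuple : ∀ j : Fin 1 → Fin m,
        (fun i => x i (j i)) = Fin.cons (x 0 (j 0)) (fun i : Fin 0 => i.elim0) := by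
      intro j
      funext i
      refine Fin.cases ?_ (fun i => i.elim0) i
      rfl
    have hsum : ∑ j : Fin 1 → Fin m, ‖T (fun i => x i (j i))‖ ^ q
        = ∑ j₀ : Fin m, ‖φ (x 0 j₀)‖ ^ q := by
      refine Fintype.sum_equiv (Equiv.funUnique (Fin 1) (Fin m)) _ _ fun j => ?_
      rw [htuple j]
      rfl
    rw [hsum]
    have hprod : ∏ i : Fin 1, weakNorm 𝕜 (if i = Fin.last 0 then r else 1) (x i)
        = weakNorm 𝕜 r (x 0) := by
      rw [Fin.prod_univ_one]
      norm_num [Fin.last]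
    rw [hprod]
    calc ∑ j₀ : Fin m, ‖φ (x 0 j₀)‖ ^ q ≤ (‖φ‖ * weakNorm 𝕜 q (x 0)) ^ q :=
          clm_sum_rpow_le hq1 (x 0) φ
      _ ≤ (‖T‖ * weakNorm 𝕜 r (x 0)) ^ q := by
          refine Real.rpow_le_rpow (mul_nonneg (norm_nonneg _) (weakNorm_nonneg hq0 (x 0))) ?_
            hq0.le
          exact mul_le_mul hφn (weakNorm_anti hr hrq (x 0))
            (weakNorm_nonneg hq0 (x 0)) (norm_nonneg T)
  | succ k ih =>
    intro E _ _ T m x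
    set cv : Fin m → (Fin (k + 1) → Fin m) → 𝕜 :=
      fun j₀ j' => T (Fin.cons (x 0 j₀) fun i => x i.succ (j' i)) with hcv
    set W : ℝ := ∏ i : Fin (k+1), weakNorm 𝕜 (if i = Fin.last k then r else 1) (x i.succ)
      with hW
    have hW0 : 0 ≤ W := Finset.prod_nonneg fun i _ => by
      split
      · exact weakNorm_nonneg hr0 _
      · exact weakNorm_nonneg one_pos _
    have hW0' : 0 ≤ weakNorm 𝕜 1 (x 0) := weakNorm_nonneg one_pos _
    -- Reindex the big sum
    have hsum : ∑ j : Fin (k + 2) → Fin m, ‖T (fun i => x i (j i))‖ ^ q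
        = ∑ j' : Fin (k+1) → Fin m, ∑ j₀ : Fin m, ‖cv j₀ j'‖ ^ q := by
      rw [← Fintype.sum_equiv (Fin.consEquiv fun _ : Fin (k+2) => Fin m)
        (fun p => ‖cv p.1 p.2‖ ^ q) _ ?_]
      · rw [Fintype.sum_prod_type, Finset.sum_comm]
      · rintro ⟨j₀, j'⟩
        have harg : (fun i => x i ((Fin.cons j₀ j' : Fin (k+2) → Fin m) i))
            = Fin.cons (x 0 j₀) fun i => x i.succ (j' i) := by
          funext i
          refine Fin.cases ?_ (fun i => ?_) i <;> rfl
        show ‖cv j₀ j'‖ ^ q = ‖T fun i => x i ((Fin.cons j₀ j' : Fin (k+2) → Fin m) i)‖ ^ q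
        rw [harg]
    rw [hsum]
    -- the sign vectors
    set z : (Fin m → Bool) → E 0 := fun ε => ∑ j₀, msSg 𝕜 (ε j₀) • x 0 j₀ with hz
    have hzn : ∀ ε, ‖z ε‖ ≤ weakNorm 𝕜 1 (x 0) := fun ε =>
      norm_sum_smul_le_weakNorm _ (fun j => le_of_eq (msSg_norm _)) (x 0)
    set Tε : (Fin m → Bool) → ContinuousMultilinearMap 𝕜 (fun i : Fin (k+1) => E i.succ) 𝕜 :=
      fun ε => T.curryLeft (z ε) with hTε
    have hTεn : ∀ ε, ‖Tε ε‖ ≤ ‖T‖ * weakNorm 𝕜 1 (x 0) := by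
      intro ε
      calc ‖Tε ε‖ ≤ ‖T.curryLeft‖ * ‖z ε‖ := (T.curryLeft).le_opNorm (z ε)
        _ = ‖T‖ * ‖z ε‖ := by rw [T.curryLeft_norm]
        _ ≤ ‖T‖ * weakNorm 𝕜 1 (x 0) :=
            mul_le_mul_of_nonneg_left (hzn ε) (norm_nonneg T)
    -- the key pointwise identity
    have hTεapp : ∀ (ε : Fin m → Bool) (j' : Fin (k+1) → Fin m),
        Tε ε (fun i => x i.succ (j' i)) = ∑ j₀, msSg 𝕜 (ε j₀) * cv j₀ j' := by
      intro ε j'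
      rw [hTε, hz]
      simp only [map_sum, map_smul]
      rw [ContinuousMultilinearMap.sum_apply]
      refine Finset.sum_congr rfl fun j₀ _ => ?_
      rw [ContinuousMultilinearMap.smul_apply, ContinuousMultilinearMap.curryLeft_apply,
        smul_eq_mul]
    set N : ℝ := (2:ℝ) ^ m with hN
    have hN0 : (0:ℝ) < N := by positivity
    -- step: averaged bound for each j'
    have hstep : ∀ j' : Fin (k+1) → Fin m,
        ∑ j₀ : Fin m, ‖cv j₀ j'‖ ^ q ≤
          N⁻¹ * ∑ ε : Fin m → Bool, ‖Tε ε (fun i => x i.succ (j' i))‖ ^ q := by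
      intro j'
      have h := ms_avg (𝕜 := 𝕜) (fun j₀ => cv j₀ j') hq
      refine le_trans h (le_of_eq ?_)
      congr 1
      refine Finset.sum_congr rfl fun ε _ => ?_
      rw [hTεapp ε j']
    -- the inductive bound for each ε
    have hih : ∀ ε : Fin m → Bool,
        ∑ j' : Fin (k+1) → Fin m, ‖Tε ε (fun i => x i.succ (j' i))‖ ^ q
          ≤ (‖T‖ * weakNorm 𝕜 1 (x 0) * W) ^ q := by
      intro ε
      refine le_trans (ih (fun i => E i.succ) (Tε ε) m (fun i => x i.succ)) ?_
      refine Real.rpow_le_rpow (mul_nonneg (norm_nonneg _) hW0) ?_ hq0.le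
      exact mul_le_mul_of_nonneg_right (hTεn ε) hW0
    calc ∑ j' : Fin (k+1) → Fin m, ∑ j₀ : Fin m, ‖cv j₀ j'‖ ^ q
        ≤ ∑ j' : Fin (k+1) → Fin m,
            N⁻¹ * ∑ ε : Fin m → Bool, ‖Tε ε (fun i => x i.succ (j' i))‖ ^ q :=
          Finset.sum_le_sum fun j' _ => hstep j'
      _ = N⁻¹ * ∑ ε : Fin m → Bool,
            ∑ j' : Fin (k+1) → Fin m, ‖Tε ε (fun i => x i.succ (j' i))‖ ^ q := by
          rw [← Finset.mul_sum, Finset.sum_comm]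
      _ ≤ N⁻¹ * ∑ ε : Fin m → Bool, (‖T‖ * weakNorm 𝕜 1 (x 0) * W) ^ q := by
          refine mul_le_mul_of_nonneg_left (Finset.sum_le_sum fun ε _ => hih ε) (by positivity)
      _ = (‖T‖ * weakNorm 𝕜 1 (x 0) * W) ^ q := by
          rw [Finset.sum_const, nsmul_eq_mul, Finset.card_univ]
          have : (Fintype.card (Fin m → Bool) : ℝ) = N := by
            rw [hN, Fintype.card_fun]
            push_cast
            norm_num
          rw [this, inv_mul_cancel_left₀ hN0.ne']
      _ = (‖T‖ * ∏ i : Fin (k+2),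
            weakNorm 𝕜 (if i = Fin.last (k+1) then r else 1) (x i)) ^ q := by
          congr 1
          have h0 : ¬ ((0 : Fin (k+2)) = Fin.last (k+1)) := by
            simp [Fin.ext_iff]
          rw [Fin.prod_univ_succ, if_neg h0, hW]
          simp only [Fin.succ_eq_last_succ]
          ring

end Main

/-- For `q ≥ 2`, `n + 1 ≥ 2` and `1 ≤ r ≤ q`, every bounded `(n+1)`-linear form is
multiple `(q; 1,…,1,r)`-summing. -/
theorem multiple_summing_ones_r {𝕜 : Type*} [RCLike 𝕜] {n : ℕ}
    {E : Fin (n + 1) → Type*}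
    [∀ i, NormedAddCommGroup (E i)] [∀ i, NormedSpace 𝕜 (E i)] [∀ i, CompleteSpace (E i)]
    (hn : 1 ≤ n) (q r : ℝ) (hq : 2 ≤ q) (hr : 1 ≤ r) (hrq : r ≤ q) :
    ∃ C, 0 ≤ C ∧
      ∀ (T : ContinuousMultilinearMap 𝕜 E 𝕜)
        (m : ℕ) (x : ∀ i, Fin m → E i),
        (∑ j : Fin (n + 1) → Fin m, ‖T (fun i => x i (j i))‖ ^ q) ^ q⁻¹ ≤
          C * ‖T‖ * ∏ i, weakNorm 𝕜 (if i = Fin.last n then r else 1) (x i) := by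
  refine ⟨1, zero_le_one, ?_⟩
  intro T m x
  have hq0 : (0:ℝ) < q := by linarith
  have h := ms_aux (𝕜 := 𝕜) q r hq hr hrq n E T m x
  have hRHS0 : 0 ≤ ‖T‖ * ∏ i, weakNorm 𝕜 (if i = Fin.last n then r else 1) (x i) := by
    refine mul_nonneg (norm_nonneg T) (Finset.prod_nonneg fun i _ => ?_)
    split
    · exact weakNorm_nonneg (by linarith) (x i)
    · exact weakNorm_nonneg one_pos (x i)
  have h2 := Real.rpow_le_rpow
    (Finset.sum_nonneg fun j _ => Real.rpow_nonneg (norm_nonneg _) q)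
    h (by positivity : (0:ℝ) ≤ q⁻¹)
  rw [Real.rpow_rpow_inv hRHS0 hq0.ne'] at h2
  rw [one_mul]
  exact h2
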